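/- Let p ≥ 2 be an integer. There exists a 2-dimensional real linear subspace W of ℂ^p (viewed as a 2p-dimensional real vector space) such that for every unitary matrix U ∈ Mₚ(ℂ) of the form U = D·P, where D is a diagonal unitary matrix and P is a permutation matrix (i.e., U lies in the semidirect product of the diagonal unitaries by the permutation matrices), if U·W = W then U = 1 or U = −1. -/

import Mathlib

/-- There is a 2-dimensional real subspace of `ℂᵖ` (`p ≥ 2`) invariant under no unitary of
the form `D * P` (diagonal unitary times permutation matrix) other than `±1`. -/
theorem exists_real_plane_not_invariant_diagonal_perm_unitary (p : ℕ) (hp : 2 ≤ p) :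
    ∃ W : Submodule ℝ (Fin p → ℂ), Module.finrank ℝ W = 2 ∧
      ∀ (D : Matrix (Fin p) (Fin p) ℂ) (σ : Equiv.Perm (Fin p)),
        (∀ i j, i ≠ j → D i j = 0) → (∀ i, ‖D i i‖ = 1) →
        ∀ U : Matrix (Fin p) (Fin p) ℂ, U = D * σ.permMatrix ℂ →
        (fun v => U.mulVec v) '' (W : Set (Fin p → ℂ)) = (W : Set (Fin p → ℂ)) →
        U = 1 ∨ U = -1 := by
  have hp0 : 0 < p := by omega
  set r : Fin p → ℝ := fun j => (j : ℝ) + 1 with hrdef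
  have rpos : ∀ j, 0 < r j := fun j => by positivity
  have rinj : Function.Injective r := by
    intro a b h
    have : ((a : ℕ) : ℝ) = ((b : ℕ) : ℝ) := by simpa [r] using h
    exact Fin.ext (Nat.cast_injective this)
  set u : Fin p → ℂ := fun _ => 1 with hudef
  set v : Fin p → ℂ := fun j => (r j : ℂ) * Complex.I with hvdef
  have i0 : Fin p := ⟨0, by omega⟩
  refine ⟨Submodule.span ℝ {u, v}, ?_, ?_⟩
  · -- dimension 2
    have hli : LinearIndependent ℝ ![u, v] := by
      rw [LinearIndependent.pair_iff]
      intro s t hst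
      have h0 := congrFun hst ⟨0, hp0⟩
      simp only [Pi.add_apply, Pi.smul_apply, u, v, Pi.zero_apply] at h0
      have h0' : (s : ℂ) + (t : ℂ) * ((r ⟨0, hp0⟩ : ℝ) : ℂ) * Complex.I = 0 := by
        rw [Complex.real_smul, Complex.real_smul] at h0
        ring_nf at h0 ⊢
        linear_combination h0
      have hre := congrArg Complex.re h0'
      have him := congrArg Complex.im h0'
      simp at hre him
      have hr0 : r ⟨0, hp0⟩ = 1 := by simp [r]
      constructor
      · exact hre
      · rw [hr0] at him; simpa using him
    have := finrank_span_eq_card (R := ℝ) hli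
    have hrange : Set.range ![u, v] = {u, v} := by
      simp only [Matrix.range_cons, Matrix.range_empty, Set.union_empty,
        Set.singleton_union]
    rw [hrange] at this
    simpa using this
  · intro D σ hDoff hDabs U hU hW
    -- mulVec formula
    have hperm : ∀ x : Fin p → ℂ, (σ.permMatrix ℂ).mulVec x = fun i => x (σ i) := by
      intro x
      ext i
      simp [Matrix.mulVec, dotProduct, Equiv.Perm.permMatrix,
        PEquiv.toMatrix_apply, Equiv.toPEquiv_apply, Finset.sum_ite_eq]
    have hmul : ∀ x : Fin p → ℂ, ∀ i, U.mulVec x i = D i i * x (σ i) := by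
      intro x i
      rw [hU, ← Matrix.mulVec_mulVec, hperm]
      simp only [Matrix.mulVec, dotProduct]
      rw [Finset.sum_eq_single i]
      · intro b _ hb
        rw [hDoff i b (Ne.symm hb), zero_mul]
      · intro h; exact absurd (Finset.mem_univ i) h
    -- membership facts
    have hmem : ∀ x ∈ Submodule.span ℝ ({u, v} : Set (Fin p → ℂ)),
        U.mulVec x ∈ Submodule.span ℝ ({u, v} : Set (Fin p → ℂ)) := by
      intro x hx
      have : U.mulVec x ∈ (fun v => U.mulVec v) ''
          ((Submodule.span ℝ ({u, v} : Set (Fin p → ℂ)) : Submodule ℝ _) :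
            Set (Fin p → ℂ)) := Set.mem_image_of_mem _ hx
      rw [hW] at this
      exact this
    have hu : u ∈ Submodule.span ℝ ({u, v} : Set (Fin p → ℂ)) :=
      Submodule.subset_span (by simp)
    have hv : v ∈ Submodule.span ℝ ({u, v} : Set (Fin p → ℂ)) :=
      Submodule.subset_span (by simp)
    obtain ⟨s, t, hst⟩ := Submodule.mem_span_pair.mp (hmem u hu)
    -- D i i = s + t * r i * I
    have hD : ∀ i, D i i = (s : ℂ) + (t : ℂ) * (r i : ℂ) * Complex.I := by
      intro i
      have h := congrFun hst i
      simp only [Pi.add_apply, Pi.smul_apply, u, v] at h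
      rw [hmul] at h
      rw [Complex.real_smul, Complex.real_smul] at h
      linear_combination -h
    -- norm equations
    have hnorm : ∀ i, s ^ 2 + (t * r i) ^ 2 = 1 := by
      intro i
      have := hDabs i
      rw [hD i] at this
      have h2 : ‖(s : ℂ) + (t : ℂ) * (r i : ℂ) * Complex.I‖ ^ 2 = 1 := by
        rw [this]; norm_num
      have h3 : (s:ℂ) + (t:ℂ) * ((r i : ℝ):ℂ) * Complex.I = ((s:ℝ):ℂ) + ((t * r i : ℝ):ℂ) * Complex.I := by
        push_cast; ring
      rw [h3, Complex.sq_norm, Complex.normSq_add_mul_I] at h2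
      exact h2
    have i1 : Fin p := ⟨1, by omega⟩
    have ht : t = 0 := by
      have h0 := hnorm ⟨0, hp0⟩
      have h1 := hnorm ⟨1, by omega⟩
      have hr0 : r ⟨0, hp0⟩ = 1 := by simp [r]
      have hr1 : r ⟨1, by omega⟩ = 2 := by norm_num [r]
      rw [hr0] at h0; rw [hr1] at h1
      nlinarith
    have hs : s = 1 ∨ s = -1 := by
      have h0 := hnorm ⟨0, hp0⟩
      rw [ht] at h0
      have : s ^ 2 = 1 := by nlinarith
      rcases mul_self_eq_one_iff.mp (by nlinarith : s * s = 1) with h | h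
      · exact Or.inl h
      · exact Or.inr h
    have hDconst : ∀ i, D i i = (s : ℂ) := by
      intro i; rw [hD i, ht]; simp
    -- second vector
    obtain ⟨s', t', hst'⟩ := Submodule.mem_span_pair.mp (hmem v hv)
    have hsig : ∀ i, t' * r i = s * r (σ i) := by
      intro i
      have h := congrFun hst' i
      simp only [Pi.add_apply, Pi.smul_apply, u, v] at h
      rw [hmul] at h
      rw [hDconst i] at h
      rw [Complex.real_smul, Complex.real_smul] at h
      have him := congrArg Complex.im h
      simp [Complex.add_im, Complex.mul_im] at him
      linarith [him]
    have hs2 : s * s = 1 := by rcases hs with h | h <;> rw [h] <;> norm_num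
    have hk : ∀ i, r (σ i) = (s * t') * r i := by
      intro i
      linear_combination (-(r (σ i))) * hs2 - s * hsig i
    have hsum : ∑ i, r (σ i) = ∑ i, r i := Equiv.sum_comp σ r
    have hsumpos : 0 < ∑ i, r i := Finset.sum_pos (fun i _ => rpos i) ⟨⟨0, hp0⟩, Finset.mem_univ _⟩
    have hk1 : s * t' = 1 := by
      have : ∑ i, r (σ i) = (s * t') * ∑ i, r i := by
        rw [Finset.mul_sum]
        exact Finset.sum_congr rfl fun i _ => hk i
      rw [hsum] at this
      have := mul_left_cancel₀ (ne_of_gt hsumpos) (by linarith : (∑ i, r i) * 1 = (∑ i, r i) * (s * t'))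
      linarith [this]
    have hsigid : ∀ i, σ i = i := by
      intro i
      apply rinj
      rw [hk i, hk1, one_mul]
    have hP : σ.permMatrix ℂ = 1 := by
      have : σ = Equiv.refl (Fin p) := Equiv.ext hsigid
      rw [this]
      simp [Equiv.Perm.permMatrix, Equiv.toPEquiv_refl, PEquiv.toMatrix_refl]
    have hUD : U = D := by rw [hU, hP, Matrix.mul_one]
    have hDfull : D = (s : ℂ) • (1 : Matrix (Fin p) (Fin p) ℂ) := by
      ext i j
      by_cases hij : i = j
      · subst hij; rw [hDconst i]; simp [Matrix.one_apply]
      · rw [hDoff i j hij]; simp [Matrix.one_apply, hij]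
    rcases hs with h | h
    · left; rw [hUD, hDfull, h]; simp
    · right; rw [hUD, hDfull, h]; push_cast; simp
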